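/- Along the straight-line path z(t) = (1/q)(1−t) + zt with z ∈ P, z ≠ (1/q,...,1/q), the weighted inner product φ(t) = Σ_{j=1}^q g_j^r(z(t)) (z_j − 1/q) ((1/q)(1−t) + z_j t)^{r−2} is strictly increasing in t on (0,1); in particular φ(0) = 0 and φ(t) > 0 for all t ∈ (0,1]. -/

import Mathlib

open Finset

private lemma gcwp_lagrange {n : ℕ} (N b : Fin n → ℝ) :
    2*((∑ j, N j * b j ^ 2) * (∑ j, N j) - (∑ j, N j * b j)^2)
    = ∑ j, ∑ k, N j * N k * (b j - b k)^2 := by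
  have h : ∑ j, ∑ k, N j * N k * (b j - b k)^2
      = ∑ j, ∑ k, ((N j * b j^2) * N k + N j * (N k * b k^2) - 2*((N j * b j) * (N k * b k))) := by
    refine Finset.sum_congr rfl fun j _ => Finset.sum_congr rfl fun k _ => by ring
  rw [h]
  simp only [Finset.sum_add_distrib, Finset.sum_sub_distrib, ← Finset.mul_sum]
  rw [← Finset.sum_mul, ← Finset.sum_mul, ← Finset.sum_mul]
  ring

private lemma gcwp_lagrange_nonneg {n : ℕ} (N b : Fin n → ℝ) (hN : ∀ j, 0 ≤ N j) :
    0 ≤ (∑ j, N j * b j ^ 2) * (∑ j, N j) - (∑ j, N j * b j)^2 := by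
  have hnn : (0:ℝ) ≤ ∑ j, ∑ k, N j * N k * (b j - b k)^2 := by
    refine Finset.sum_nonneg fun j _ => Finset.sum_nonneg fun k _ => ?_
    have := hN j; have := hN k; positivity
  nlinarith [gcwp_lagrange N b]

private lemma gcwp_lagrange_pos {n : ℕ} (N b : Fin n → ℝ) (hN : ∀ j, 0 < N j)
    (j0 k0 : Fin n) (hb : b j0 ≠ b k0) :
    0 < (∑ j, N j * b j ^ 2) * (∑ j, N j) - (∑ j, N j * b j)^2 := by
  have hterm : 0 < N j0 * N k0 * (b j0 - b k0)^2 := by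
    have h0 := hN j0; have h1 := hN k0
    have h2 : (0:ℝ) < (b j0 - b k0)^2 := by
      have : b j0 - b k0 ≠ 0 := sub_ne_zero.mpr hb
      positivity
    positivity
  have h1 : N j0 * N k0 * (b j0 - b k0)^2 ≤ ∑ k, N j0 * N k * (b j0 - b k)^2 :=
    Finset.single_le_sum (f := fun k => N j0 * N k * (b j0 - b k)^2)
      (fun k _ => by have := hN j0; have := hN k; positivity) (Finset.mem_univ k0)
  have h2 : ∑ k, N j0 * N k * (b j0 - b k)^2 ≤ ∑ j, ∑ k, N j * N k * (b j - b k)^2 :=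
    Finset.single_le_sum (f := fun j => ∑ k, N j * N k * (b j - b k)^2)
      (fun j _ => Finset.sum_nonneg fun k _ => by have := hN j; have := hN k; positivity)
      (Finset.mem_univ j0)
  nlinarith [gcwp_lagrange N b]
open Finset

noncomputable def gcwpU (q : ℕ) (z : Fin q → ℝ) (t : ℝ) (j : Fin q) : ℝ :=
  1/(q:ℝ)*(1-t) + z j * t

noncomputable def gcwpE (q r : ℕ) (β : ℝ) (z : Fin q → ℝ) (t : ℝ) (j : Fin q) : ℝ :=
  Real.exp (β * (gcwpU q z t j)^(r-1))

noncomputable def gcwpS (q r : ℕ) (β : ℝ) (z : Fin q → ℝ) (t : ℝ) : ℝ :=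
  ∑ j, gcwpE q r β z t j

noncomputable def gcwpA (q r : ℕ) (β : ℝ) (z : Fin q → ℝ) (t : ℝ) : ℝ :=
  ∑ j, gcwpE q r β z t j * (z j - 1/(q:ℝ)) * (gcwpU q z t j)^(r-2)

lemma gcwpS_pos (q r : ℕ) (β : ℝ) (z : Fin q → ℝ) (t : ℝ) (hq : 0 < q) :
    0 < gcwpS q r β z t :=
  Finset.sum_pos (fun j _ => Real.exp_pos _) (by simp [Finset.univ_nonempty_iff, Fin.pos_iff_nonempty.mp hq])

lemma gcwp_hasDerivAt_U (q : ℕ) (z : Fin q → ℝ) (j : Fin q) (t : ℝ) :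
    HasDerivAt (fun t => gcwpU q z t j) (z j - 1/(q:ℝ)) t := by
  have h1 : HasDerivAt (fun t:ℝ => 1/(q:ℝ)*(1-t)) (1/(q:ℝ) * (0-1)) t :=
    ((hasDerivAt_const t (1:ℝ)).sub (hasDerivAt_id t)).const_mul _
  have h2 : HasDerivAt (fun t:ℝ => z j * t) (z j * 1) t := (hasDerivAt_id t).const_mul _
  have h3 := h1.add h2
  rw [show 1/(q:ℝ)*(0-1) + z j * 1 = z j - 1/(q:ℝ) by ring] at h3
  exact h3

lemma gcwp_hasDerivAt_E (q r : ℕ) (β : ℝ) (z : Fin q → ℝ) (j : Fin q) (t : ℝ) :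
    HasDerivAt (fun t => gcwpE q r β z t j)
      (gcwpE q r β z t j * (β * (((r-1:ℕ):ℝ) * (gcwpU q z t j)^(r-2) * (z j - 1/(q:ℝ))))) t := by
  have := ((((gcwp_hasDerivAt_U q z j t).pow (r-1)).const_mul β).exp)
  convert this using 2
  · rfl
  · rfl
  · rw [Nat.sub_sub]

lemma gcwp_hasDerivAt_S (q r : ℕ) (β : ℝ) (z : Fin q → ℝ) (t : ℝ) :
    HasDerivAt (gcwpS q r β z) (β * ((r-1:ℕ):ℝ) * gcwpA q r β z t) t := by
  have h : HasDerivAt (gcwpS q r β z)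
      (∑ j, gcwpE q r β z t j * (β * (((r-1:ℕ):ℝ) * (gcwpU q z t j)^(r-2) * (z j - 1/(q:ℝ))))) t :=
    HasDerivAt.fun_sum (fun j _ => gcwp_hasDerivAt_E q r β z j t)
  convert h using 1
  rw [gcwpA, Finset.mul_sum]
  exact Finset.sum_congr rfl fun j _ => by ring

lemma gcwp_hasDerivAt_A (q r : ℕ) (β : ℝ) (z : Fin q → ℝ) (t : ℝ) :
    HasDerivAt (gcwpA q r β z)
      (β * ((r-1:ℕ):ℝ) * (∑ j, gcwpE q r β z t j * (z j - 1/(q:ℝ))^2 * ((gcwpU q z t j)^(r-2))^2)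
        + ((r-2:ℕ):ℝ) * (∑ j, gcwpE q r β z t j * (z j - 1/(q:ℝ))^2 * (gcwpU q z t j)^(r-3))) t := by
  have h : HasDerivAt (gcwpA q r β z)
      (∑ j, ((gcwpE q r β z t j * (β * (((r-1:ℕ):ℝ) * (gcwpU q z t j)^(r-2) * (z j - 1/(q:ℝ)))))
          * (z j - 1/(q:ℝ)) * (gcwpU q z t j)^(r-2)
        + (gcwpE q r β z t j * (z j - 1/(q:ℝ)))
          * (((r-2:ℕ):ℝ) * (gcwpU q z t j)^(r-3) * (z j - 1/(q:ℝ))))) t := by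
    refine HasDerivAt.fun_sum (fun j _ => ?_)
    have h1 := ((gcwp_hasDerivAt_E q r β z j t).mul_const (z j - 1/(q:ℝ))).mul
      ((gcwp_hasDerivAt_U q z j t).pow (r-2))
    convert h1 using 2
    · rfl
    · rfl
    · rfl
    · rw [Nat.sub_sub]
  convert h using 1
  rw [Finset.mul_sum, Finset.mul_sum, ← Finset.sum_add_distrib]
  exact Finset.sum_congr rfl fun j _ => by ring

lemma gcwpU_pos (q : ℕ) (hq : 0 < q) (z : Fin q → ℝ) (hz0 : ∀ k, 0 ≤ z k)
    (t : ℝ) (ht : t ∈ Set.Ioo (0:ℝ) 1) (j : Fin q) : 0 < gcwpU q z t j := by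
  have h1 : (0:ℝ) < 1/(q:ℝ)*(1-t) := by
    have : (0:ℝ) < (q:ℝ) := by exact_mod_cast hq
    have : (0:ℝ) < 1/(q:ℝ) := by positivity
    nlinarith [ht.2]
  have h2 : 0 ≤ z j * t := mul_nonneg (hz0 j) (le_of_lt ht.1)
  rw [gcwpU]; linarith

lemma gcwp_sum_a_eq_zero (q : ℕ) (hq : 0 < q) (z : Fin q → ℝ) (hz1 : ∑ k, z k = 1) :
    ∑ j, (z j - 1/(q:ℝ)) = 0 := by
  have hq' : (q:ℝ) ≠ 0 := by exact_mod_cast hq.ne'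
  rw [Finset.sum_sub_distrib, hz1, Finset.sum_const, Finset.card_univ, Fintype.card_fin]
  simp [nsmul_eq_mul, hq']

lemma gcwp_exists_a (q : ℕ) (hq : 2 ≤ q) (z : Fin q → ℝ) (hz1 : ∑ k, z k = 1)
    (hzne : z ≠ fun _ => 1 / (q : ℝ)) :
    ∃ j0 k0 : Fin q, z j0 - 1/(q:ℝ) ≠ 0 ∧ z j0 - 1/(q:ℝ) ≠ z k0 - 1/(q:ℝ) := by
  have hq0 : 0 < q := by omega
  obtain ⟨j0, hj0⟩ : ∃ j0, z j0 - 1/(q:ℝ) ≠ 0 := by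
    by_contra h
    push_neg at h
    exact hzne (funext fun j => by have := h j; linarith)
  by_contra h
  push_neg at h
  have hall : ∀ k, z k - 1/(q:ℝ) = z j0 - 1/(q:ℝ) := fun k => ((h j0 k) hj0).symm
  have hsum := gcwp_sum_a_eq_zero q hq0 z hz1
  rw [Finset.sum_congr rfl (fun k _ => hall k), Finset.sum_const, Finset.card_univ,
    Fintype.card_fin] at hsum
  have hqR : (0:ℝ) < (q:ℝ) := by exact_mod_cast hq0
  rw [nsmul_eq_mul] at hsum
  have : z j0 - 1/(q:ℝ) = 0 := (mul_eq_zero.mp hsum).resolve_left (by positivity)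
  exact hj0 this

lemma gcwp_deriv_pos (q r : ℕ) (hq : 2 ≤ q) (hr : 2 ≤ r) (β : ℝ) (hβ : 0 < β)
    (z : Fin q → ℝ) (hz0 : ∀ k, 0 ≤ z k) (hz1 : ∑ k, z k = 1)
    (hzne : z ≠ fun _ => 1 / (q : ℝ)) (t : ℝ) (ht : t ∈ Set.Ioo (0:ℝ) 1) :
    0 < ((β * ((r-1:ℕ):ℝ) * (∑ j, gcwpE q r β z t j * (z j - 1/(q:ℝ))^2 * ((gcwpU q z t j)^(r-2))^2)
        + ((r-2:ℕ):ℝ) * (∑ j, gcwpE q r β z t j * (z j - 1/(q:ℝ))^2 * (gcwpU q z t j)^(r-3)))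
        * gcwpS q r β z t
        - gcwpA q r β z t * (β * ((r-1:ℕ):ℝ) * gcwpA q r β z t)) / (gcwpS q r β z t)^2 := by
  have hq0 : 0 < q := by omega
  set N := gcwpE q r β z t with hN
  set b : Fin q → ℝ := fun j => (z j - 1/(q:ℝ)) * (gcwpU q z t j)^(r-2) with hb
  have hNpos : ∀ j, 0 < N j := fun j => Real.exp_pos _
  have hSpos : 0 < gcwpS q r β z t := gcwpS_pos q r β z t hq0
  have hP : ∑ j, gcwpE q r β z t j * (z j - 1/(q:ℝ))^2 * ((gcwpU q z t j)^(r-2))^2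
      = ∑ j, N j * b j ^ 2 := Finset.sum_congr rfl fun j _ => by rw [hb]; ring
  have hA : gcwpA q r β z t = ∑ j, N j * b j := by
    rw [gcwpA]; exact Finset.sum_congr rfl fun j _ => by rw [hb]; ring
  have hS : gcwpS q r β z t = ∑ j, N j := rfl
  have hr1 : (0:ℝ) < ((r-1:ℕ):ℝ) := by
    have : 1 ≤ r - 1 := by omega
    exact_mod_cast Nat.lt_of_lt_of_le Nat.zero_lt_one this
  obtain ⟨j0, k0, hj0, hjk⟩ := gcwp_exists_a q hq z hz1 hzne
  have key : 0 < (β * ((r-1:ℕ):ℝ) * (∑ j, N j * b j ^ 2)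
        + ((r-2:ℕ):ℝ) * (∑ j, gcwpE q r β z t j * (z j - 1/(q:ℝ))^2 * (gcwpU q z t j)^(r-3)))
        * (∑ j, N j) - (∑ j, N j * b j) * (β * ((r-1:ℕ):ℝ) * (∑ j, N j * b j)) := by
    rcases eq_or_lt_of_le hr with hr2 | hr3
    · -- r = 2
      have h0 : r - 2 = 0 := by omega
      have hbeq : ∀ j, b j = z j - 1/(q:ℝ) := fun j => by simp [hb, h0]
      have hlag : 0 < (∑ j, N j * b j ^ 2) * (∑ j, N j) - (∑ j, N j * b j)^2 := by
        refine gcwp_lagrange_pos N b hNpos j0 k0 ?_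
        rw [hbeq, hbeq]; exact hjk
      have h20 : ((r-2:ℕ):ℝ) = 0 := by rw [h0]; norm_num
      rw [h20]
      nlinarith [mul_pos (mul_pos hβ hr1) hlag]
    · -- r ≥ 3
      have hlag : 0 ≤ (∑ j, N j * b j ^ 2) * (∑ j, N j) - (∑ j, N j * b j)^2 :=
        gcwp_lagrange_nonneg N b (fun j => (hNpos j).le)
      have hr2pos : (0:ℝ) < ((r-2:ℕ):ℝ) := by
        have : 1 ≤ r - 2 := by omega
        exact_mod_cast Nat.lt_of_lt_of_le Nat.zero_lt_one this
      have hQ : 0 < ∑ j, gcwpE q r β z t j * (z j - 1/(q:ℝ))^2 * (gcwpU q z t j)^(r-3) := by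
        refine Finset.sum_pos' (fun j _ => ?_) ⟨j0, Finset.mem_univ j0, ?_⟩
        · have := (hNpos j); have := (gcwpU_pos q hq0 z hz0 t ht j); positivity
        · have h1 := hNpos j0
          have h2 := gcwpU_pos q hq0 z hz0 t ht j0
          have h3 : (0:ℝ) < (z j0 - 1/(q:ℝ))^2 := by positivity
          positivity
      nlinarith [mul_nonneg (mul_nonneg hβ.le hr1.le) hlag,
        mul_pos (mul_pos hr2pos hQ) hSpos]
  rw [hP, hA, hS] at *
  positivity

lemma gcwp_phi_zero (q r : ℕ) (hq : 0 < q) (β : ℝ) (z : Fin q → ℝ) (hz1 : ∑ k, z k = 1) :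
    gcwpA q r β z 0 / gcwpS q r β z 0 = 0 := by
  have hU0 : ∀ j, gcwpU q z 0 j = 1/(q:ℝ) := fun j => by rw [gcwpU]; ring
  have hA0 : gcwpA q r β z 0 = 0 := by
    rw [gcwpA]
    calc ∑ j, gcwpE q r β z 0 j * (z j - 1/(q:ℝ)) * (gcwpU q z 0 j)^(r-2)
        = ∑ j, (z j - 1/(q:ℝ)) * (Real.exp (β * (1/(q:ℝ))^(r-1)) * (1/(q:ℝ))^(r-2)) :=
          Finset.sum_congr rfl fun j _ => by rw [gcwpE, hU0]; ring
      _ = (∑ j, (z j - 1/(q:ℝ))) * (Real.exp (β * (1/(q:ℝ))^(r-1)) * (1/(q:ℝ))^(r-2)) :=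
          (Finset.sum_mul _ _ _).symm
      _ = 0 := by rw [gcwp_sum_a_eq_zero q hq z hz1, zero_mul]
  rw [hA0, zero_div]

lemma gcwp_mono_Icc (q r : ℕ) (hq : 2 ≤ q) (hr : 2 ≤ r) (β : ℝ) (hβ : 0 < β)
    (z : Fin q → ℝ) (hz0 : ∀ k, 0 ≤ z k) (hz1 : ∑ k, z k = 1)
    (hzne : z ≠ fun _ => 1 / (q : ℝ)) :
    StrictMonoOn (fun t => gcwpA q r β z t / gcwpS q r β z t) (Set.Icc (0:ℝ) 1) := by
  have hq0 : 0 < q := by omega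
  have hderiv : ∀ t, HasDerivAt (fun t => gcwpA q r β z t / gcwpS q r β z t)
      (((β * ((r-1:ℕ):ℝ) * (∑ j, gcwpE q r β z t j * (z j - 1/(q:ℝ))^2 * ((gcwpU q z t j)^(r-2))^2)
        + ((r-2:ℕ):ℝ) * (∑ j, gcwpE q r β z t j * (z j - 1/(q:ℝ))^2 * (gcwpU q z t j)^(r-3)))
        * gcwpS q r β z t
        - gcwpA q r β z t * (β * ((r-1:ℕ):ℝ) * gcwpA q r β z t)) / (gcwpS q r β z t)^2) t :=
    fun t => (gcwp_hasDerivAt_A q r β z t).div (gcwp_hasDerivAt_S q r β z t)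
      (gcwpS_pos q r β z t hq0).ne'
  have hdiff : Differentiable ℝ (fun t => gcwpA q r β z t / gcwpS q r β z t) :=
    fun t => (hderiv t).differentiableAt
  apply strictMonoOn_of_deriv_pos (convex_Icc 0 1) hdiff.continuous.continuousOn
  intro t ht
  rw [interior_Icc] at ht
  rw [(hderiv t).deriv]
  exact gcwp_deriv_pos q r hq hr β hβ z hz0 hz1 hzne t ht

/-- Along the straight-line path `z(t) = (1/q)(1−t) + zt` with `z` in
the simplex, `z ≠ z_β`, the weighted inner product
`φ(t) = ∑_j g_j^r(z(t)) (z_j − 1/q) z(t)_j^{r−2}` is strictly increasing on (0,1);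
moreover `φ(0) = 0` and `φ(t) > 0` for `t ∈ (0,1]`. -/
theorem gcwp_weighted_inner_product_increasing
    (q r : ℕ) (hq : 2 ≤ q) (hr : 2 ≤ r) (β : ℝ) (hβ : 0 < β)
    (z : Fin q → ℝ) (hz : (∀ k, 0 ≤ z k) ∧ ∑ k, z k = 1)
    (hzne : z ≠ fun _ => 1 / (q : ℝ)) :
    let zp : ℝ → Fin q → ℝ := fun t k => (1 / q) * (1 - t) + z k * t
    let g : (Fin q → ℝ) → (Fin q → ℝ) := fun w k =>
      Real.exp (β * w k ^ (r - 1)) / ∑ j, Real.exp (β * w j ^ (r - 1))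
    let φ : ℝ → ℝ := fun t => ∑ j, g (zp t) j * (z j - 1 / q) * (zp t j ^ (r - 2))
    StrictMonoOn φ (Set.Ioo (0 : ℝ) 1) ∧ φ 0 = 0 ∧
      ∀ t ∈ Set.Ioc (0 : ℝ) 1, 0 < φ t := by
  obtain ⟨hz0, hz1⟩ := hz
  intro zp g φ
  have hq0 : 0 < q := by omega
  have hφ : φ = fun t => gcwpA q r β z t / gcwpS q r β z t := by
    funext t
    show ∑ j, (Real.exp (β * ((1/(q:ℝ)) * (1 - t) + z j * t) ^ (r - 1)) /
        ∑ k, Real.exp (β * ((1/(q:ℝ)) * (1 - t) + z k * t) ^ (r - 1))) * (z j - 1/(q:ℝ)) *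
        (((1/(q:ℝ)) * (1 - t) + z j * t) ^ (r - 2)) = gcwpA q r β z t / gcwpS q r β z t
    rw [gcwpA, gcwpS, Finset.sum_div]
    refine Finset.sum_congr rfl fun j _ => ?_
    simp only [gcwpE, gcwpU]
    ring
  have hmono := gcwp_mono_Icc q r hq hr β hβ z hz0 hz1 hzne
  have hzero := gcwp_phi_zero q r hq0 β z hz1
  rw [hφ]
  refine ⟨hmono.mono Set.Ioo_subset_Icc_self, hzero, fun t ht => ?_⟩
  have h0m : (0:ℝ) ∈ Set.Icc (0:ℝ) 1 := by norm_num
  have htm : t ∈ Set.Icc (0:ℝ) 1 := ⟨ht.1.le, ht.2⟩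
  have := hmono h0m htm ht.1
  simpa [hzero] using this
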